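/- For a Gaussian belief with information matrix Λ (positive definite) and measurement Jacobian A partitioned into equal halves A_s and A_{s̄} (each with m/2 rows), the conditional entropy -C + (1/2) ln det(Λ + AᵀA) lies between the lower bound (1/2)[ln det(Λ + A_sᵀA_s) + ln det(Λ + A_{s̄}ᵀA_{s̄}) - ln det Λ] and the upper bound given by either half alone: (1/2) ln det(Λ + A_sᵀA_s) ≤ (1/2) ln det(Λ + AᵀA). -/

import Mathlib

open Matrix


/-- det(1+R) ≥ 1 for real psd R. -/
lemma det_one_add_psd {k : ℕ} {R : Matrix (Fin k) (Fin k) ℝ} (hR : R.PosSemidef) :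
    1 ≤ (1 + R).det := by
  have hH := hR.isHermitian
  set U : Matrix (Fin k) (Fin k) ℝ := (hH.eigenvectorUnitary : Matrix (Fin k) (Fin k) ℝ) with hUdef
  have hU : U * star U = 1 := mem_unitaryGroup_iff.mp hH.eigenvectorUnitary.2
  set D : Matrix (Fin k) (Fin k) ℝ := diagonal (RCLike.ofReal ∘ hH.eigenvalues) with hDdef
  have hdecomp : 1 + R = U * (1 + D) * star U := by
    rw [Matrix.mul_add, Matrix.mul_one, Matrix.add_mul, hU]
    congr 1
    rw [hH.spectral_theorem, Unitary.conjStarAlgAut_apply]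
  have hdetU : U.det * (star U).det = 1 := by
    have := congrArg det hU
    rwa [det_mul, det_one] at this
  have h1D : (1 : ℝ) ≤ (1 + D).det := by
    rw [hDdef, ← diagonal_one, diagonal_add, det_diagonal]
    simp only [Pi.add_apply, Pi.one_apply, Function.comp_apply, RCLike.ofReal_real_eq_id, id]
    calc (1:ℝ) = ∏ _i : Fin k, (1:ℝ) := by simp
      _ ≤ ∏ i, ((1:ℝ) + hH.eigenvalues i) := by
          refine Finset.prod_le_prod (fun i _ => zero_le_one) (fun i _ => ?_)
          have := hR.eigenvalues_nonneg i
          linarith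
  calc (1:ℝ) ≤ (1 + D).det := h1D
    _ = (1 + R).det := by rw [hdecomp, det_mul, det_mul]; nlinarith [hdetU]

open scoped MatrixOrder in
/-- Determinant monotonicity: det P ≤ det (P + S) for P posdef, S psd. -/
lemma det_le_det_add' {k : ℕ} {P S : Matrix (Fin k) (Fin k) ℝ}
    (hP : P.PosDef) (hS : S.PosSemidef) : P.det ≤ (P + S).det := by
  set Q := CFC.sqrt P with hQdef
  have hQQ : Q * Q = P := CFC.sqrt_mul_sqrt_self P hP.posSemidef.nonneg
  have hdetQ : Q.det * Q.det = P.det := by rw [← det_mul, hQQ]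
  have hQne : Q.det ≠ 0 := by
    intro h; rw [h, mul_zero] at hdetQ; exact hP.det_pos.ne' hdetQ.symm
  have hQunit : IsUnit Q.det := isUnit_iff_ne_zero.mpr hQne
  have hQH : Q.IsHermitian := (CFC.sqrt_nonneg P).posSemidef.isHermitian
  have hQiH : (Q⁻¹).IsHermitian := hQH.inv
  have hR : (Q⁻¹ * S * Q⁻¹).PosSemidef := by
    have := hS.conjTranspose_mul_mul_same (Q⁻¹)
    rwa [hQiH.eq] at this
  have key : P + S = Q * (1 + Q⁻¹ * S * Q⁻¹) * Q := by
    rw [Matrix.mul_add, Matrix.mul_one, Matrix.add_mul, hQQ]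
    congr 1
    symm
    calc Q * (Q⁻¹ * S * Q⁻¹) * Q
        = (Q * Q⁻¹) * S * (Q⁻¹ * Q) := by
          simp only [Matrix.mul_assoc]
      _ = S := by
          rw [Matrix.mul_nonsing_inv _ hQunit, Matrix.nonsing_inv_mul _ hQunit,
            Matrix.one_mul, Matrix.mul_one]
  have h1 : 1 ≤ (1 + Q⁻¹ * S * Q⁻¹).det := det_one_add_psd hR
  calc P.det = Q.det * Q.det := hdetQ.symm
    _ ≤ Q.det * Q.det * (1 + Q⁻¹ * S * Q⁻¹).det := by nlinarith [hP.det_pos, hdetQ]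
    _ = (P + S).det := by rw [key, det_mul, det_mul]; ring

/-- Λ⁻¹ - (Λ+B)⁻¹ is psd for Λ posdef, B psd. -/
lemma inv_sub_inv_psd {k : ℕ} {Λ B : Matrix (Fin k) (Fin k) ℝ}
    (hΛ : Λ.PosDef) (hB : B.PosSemidef) : (Λ⁻¹ - (Λ + B)⁻¹).PosSemidef := by
  set M := Λ + B with hMdef
  have hM : M.PosDef := hΛ.add_posSemidef hB
  have hΛu : IsUnit Λ.det := isUnit_iff_ne_zero.mpr hΛ.det_pos.ne'
  have hMu : IsUnit M.det := isUnit_iff_ne_zero.mpr hM.det_pos.ne'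
  have hmid : (B + B * Λ⁻¹ * B).PosSemidef := by
    have h2 : (B * Λ⁻¹ * B).PosSemidef := by
      have := (hΛ.inv.posSemidef).conjTranspose_mul_mul_same B
      rwa [hB.isHermitian.eq] at this
    exact hB.add h2
  have hident : Λ⁻¹ - M⁻¹ = M⁻¹ * (B + B * Λ⁻¹ * B) * M⁻¹ := by
    have hexp : B + B * Λ⁻¹ * B = M * Λ⁻¹ * M - M := by
      rw [hMdef, Matrix.add_mul, Matrix.mul_nonsing_inv _ hΛu, Matrix.add_mul,
        Matrix.one_mul, Matrix.mul_add, Matrix.mul_assoc B Λ⁻¹ Λ,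
        Matrix.nonsing_inv_mul _ hΛu, Matrix.mul_one]
      abel
    rw [hexp, Matrix.mul_sub, Matrix.sub_mul, Matrix.nonsing_inv_mul _ hMu, Matrix.one_mul]
    have e1 : M⁻¹ * (M * Λ⁻¹ * M) * M⁻¹ = Λ⁻¹ := by
      calc M⁻¹ * (M * Λ⁻¹ * M) * M⁻¹
          = (M⁻¹ * M) * Λ⁻¹ * (M * M⁻¹) := by simp only [Matrix.mul_assoc]
        _ = Λ⁻¹ := by
            rw [Matrix.nonsing_inv_mul _ hMu, Matrix.mul_nonsing_inv _ hMu,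
              Matrix.one_mul, Matrix.mul_one]
    rw [e1]
  rw [hident]
  have hMiH : (M⁻¹).IsHermitian := hM.isHermitian.inv
  have := hmid.conjTranspose_mul_mul_same (M⁻¹)
  rwa [hMiH.eq] at this

/-- for a Gaussian belief with information matrix Λ and measurement
Jacobian A partitioned into halves Aₛ, Aᵦ (so that AᵀA = AₛᵀAₛ + AᵦᵀAᵦ), the quantity
-C + (1/2) ln det(Λ + AᵀA) lies between -C + (1/2) ln det(Λ + AₛᵀAₛ) (a half alone)
and -C + (1/2)[ln det(Λ + AₛᵀAₛ) + ln det(Λ + AᵦᵀAᵦ) - ln det Λ]. -/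
theorem gaussian_entropy_bounds {n m : ℕ}
    (Λ : Matrix (Fin n) (Fin n) ℝ) (hΛ : Λ.PosDef)
    (A : Matrix (Fin m) (Fin n) ℝ)
    (As Ab : Matrix (Fin (m / 2)) (Fin n) ℝ)
    (hpart : Aᵀ * A = Asᵀ * As + Abᵀ * Ab) (C : ℝ) :
    (-C + (1 / 2) * Real.log (Λ + Asᵀ * As).det ≤
        -C + (1 / 2) * Real.log (Λ + Aᵀ * A).det) ∧
      (-C + (1 / 2) * Real.log (Λ + Aᵀ * A).det ≤
        -C + (1 / 2) * (Real.log (Λ + Asᵀ * As).det +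
          Real.log (Λ + Abᵀ * Ab).det - Real.log Λ.det)) := by
  have hB : (Asᵀ * As).PosSemidef := by
    have := posSemidef_conjTranspose_mul_self As
    rwa [conjTranspose_eq_transpose_of_trivial] at this
  have hCb : (Abᵀ * Ab).PosSemidef := by
    have := posSemidef_conjTranspose_mul_self Ab
    rwa [conjTranspose_eq_transpose_of_trivial] at this
  set M : Matrix (Fin n) (Fin n) ℝ := Λ + Asᵀ * As with hMdef
  have hM : M.PosDef := hΛ.add_posSemidef hB
  have hΛC : (Λ + Abᵀ * Ab).PosDef := hΛ.add_posSemidef hCb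
  have hfull : Λ + Aᵀ * A = M + Abᵀ * Ab := by rw [hpart, hMdef, add_assoc]
  have hΛA : (Λ + Aᵀ * A).PosDef := by rw [hfull]; exact hM.add_posSemidef hCb
  -- Part 1
  have hdet1 : M.det ≤ (Λ + Aᵀ * A).det := by
    rw [hfull]; exact det_le_det_add' hM hCb
  have part1 : Real.log M.det ≤ Real.log (Λ + Aᵀ * A).det :=
    Real.log_le_log hM.det_pos hdet1
  -- Part 2 : det(M + Cb) * det Λ ≤ det M * det (Λ + Cb)
  have hMu : IsUnit M.det := isUnit_iff_ne_zero.mpr hM.det_pos.ne'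
  have hΛu : IsUnit Λ.det := isUnit_iff_ne_zero.mpr hΛ.det_pos.ne'
  set X : Matrix (Fin (m / 2)) (Fin (m / 2)) ℝ := Ab * (M⁻¹ * Abᵀ) with hXdef
  set Y : Matrix (Fin (m / 2)) (Fin (m / 2)) ℝ := Ab * (Λ⁻¹ * Abᵀ) with hYdef
  have hdetM : (M + Abᵀ * Ab).det = M.det * (1 + X).det := by
    have h1 : M + Abᵀ * Ab = M * (1 + M⁻¹ * (Abᵀ * Ab)) := by
      rw [Matrix.mul_add, Matrix.mul_one, ← Matrix.mul_assoc,
        Matrix.mul_nonsing_inv _ hMu, Matrix.one_mul]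
    rw [h1, det_mul]
    congr 1
    rw [← Matrix.mul_assoc, det_one_add_mul_comm]
  have hdetΛ : (Λ + Abᵀ * Ab).det = Λ.det * (1 + Y).det := by
    have h1 : Λ + Abᵀ * Ab = Λ * (1 + Λ⁻¹ * (Abᵀ * Ab)) := by
      rw [Matrix.mul_add, Matrix.mul_one, ← Matrix.mul_assoc,
        Matrix.mul_nonsing_inv _ hΛu, Matrix.one_mul]
    rw [h1, det_mul]
    congr 1
    rw [← Matrix.mul_assoc, det_one_add_mul_comm]
  have hX : X.PosSemidef := by
    have := (hM.inv.posSemidef).mul_mul_conjTranspose_same Ab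
    rwa [conjTranspose_eq_transpose_of_trivial, Matrix.mul_assoc] at this
  have h1X : (1 + X).PosDef := Matrix.PosDef.one.add_posSemidef hX
  have hdiff : (Ab * ((Λ⁻¹ - M⁻¹) * Abᵀ)).PosSemidef := by
    have := (inv_sub_inv_psd hΛ hB).mul_mul_conjTranspose_same Ab
    rw [conjTranspose_eq_transpose_of_trivial, Matrix.mul_assoc] at this
    exact this
  have hYX : 1 + Y = (1 + X) + Ab * ((Λ⁻¹ - M⁻¹) * Abᵀ) := by
    rw [hXdef, hYdef, Matrix.sub_mul, Matrix.mul_sub]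
    abel
  have hXY : (1 + X).det ≤ (1 + Y).det := by
    rw [hYX]; exact det_le_det_add' h1X hdiff
  have hdet2 : (Λ + Aᵀ * A).det * Λ.det ≤ M.det * (Λ + Abᵀ * Ab).det := by
    rw [hfull, hdetM, hdetΛ]
    have hp : 0 ≤ M.det * Λ.det := le_of_lt (mul_pos hM.det_pos hΛ.det_pos)
    nlinarith [mul_le_mul_of_nonneg_left hXY hp]
  have hlog2 : Real.log ((Λ + Aᵀ * A).det * Λ.det) ≤
      Real.log (M.det * (Λ + Abᵀ * Ab).det) := by
    exact Real.log_le_log (mul_pos hΛA.det_pos hΛ.det_pos) hdet2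
  rw [Real.log_mul hΛA.det_pos.ne' hΛ.det_pos.ne',
    Real.log_mul hM.det_pos.ne' hΛC.det_pos.ne'] at hlog2
  constructor
  · linarith
  · linarith
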